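/- Let T_j : X ⇉ X be union α_j-averaged nonexpansive operators for j = 1,...,m, and let ω_1,...,ω_m > 0 with Σ_j ω_j = 1. Then the Minkowski convex combination Σ_j ω_j T_j is union α-averaged nonexpansive with α := Σ_j ω_j α_j. -/

import Mathlib

open Filter Topology

/-- Outer semicontinuity of an index-valued map `φ : X ⇉ I` (finite discrete `I`). -/
def OSCIdx {X I : Type*} [TopologicalSpace X] (φ : X → Set I) : Prop :=
  ∀ (x : X) (i : I) (xn : ℕ → X),
    Tendsto xn atTop (nhds x) → (∀ n, i ∈ φ (xn n)) → i ∈ φ x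

/-- A single-valued operator `S : X → X` is `α`-averaged nonexpansive (`α ∈ (0,1)`). -/
def Averaged {X : Type*} [NormedAddCommGroup X] [InnerProductSpace ℝ X]
    (α : ℝ) (S : X → X) : Prop :=
  0 < α ∧ α < 1 ∧
    ∀ x y : X, ‖S x - S y‖ ^ 2 + (1 - α) / α * ‖(x - S x) - (y - S y)‖ ^ 2 ≤ ‖x - y‖ ^ 2

/-- A set-valued operator `T : X ⇉ X` is union `α`-averaged nonexpansive if
`T(x) = {T_i(x) : i ∈ φ(x)}` for a finite index set `I`, a collection of
`α`-averaged nonexpansive operators `{T_i}` and an osc nonempty-valued selector `φ`. -/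
def UnionAveraged {X : Type*} [NormedAddCommGroup X] [InnerProductSpace ℝ X]
    (α : ℝ) (T : X → Set X) : Prop :=
  ∃ (I : Type) (_ : Fintype I) (Ts : I → X → X) (φ : X → Set I),
    (∀ i, Averaged α (Ts i)) ∧ OSCIdx φ ∧ (∀ x, (φ x).Nonempty) ∧
    ∀ x, T x = {y | ∃ i ∈ φ x, y = Ts i x}

open scoped RealInnerProductSpace

/-- Key identity: the averagedness inequality is equivalent to a nonexpansiveness
inequality for the shifted operator. -/
lemma key_iff {X : Type*} [NormedAddCommGroup X] [InnerProductSpace ℝ X]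
    (α : ℝ) (hα : 0 < α) (u v : X) :
    ‖v‖ ^ 2 + (1 - α) / α * ‖u - v‖ ^ 2 ≤ ‖u‖ ^ 2 ↔ ‖v - (1 - α) • u‖ ≤ α * ‖u‖ := by
  have h1 : ‖u - v‖ ^ 2 = ‖u‖ ^ 2 - 2 * (inner ℝ u v : ℝ) + ‖v‖ ^ 2 := norm_sub_sq_real u v
  have h2 : ‖v - (1 - α) • u‖ ^ 2
      = ‖v‖ ^ 2 - 2 * ((1 - α) * (inner ℝ u v : ℝ)) + (1 - α) ^ 2 * ‖u‖ ^ 2 := by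
    rw [norm_sub_sq_real, real_inner_smul_right, real_inner_comm, norm_smul]
    rw [mul_pow, Real.norm_eq_abs, sq_abs]
  have hne : α ≠ 0 := ne_of_gt hα
  have hid : α * (‖v‖ ^ 2 + (1 - α) / α * ‖u - v‖ ^ 2 - ‖u‖ ^ 2)
      = ‖v - (1 - α) • u‖ ^ 2 - (α * ‖u‖) ^ 2 := by
    rw [h1, h2]; field_simp; ring
  have hsq : ‖v - (1 - α) • u‖ ^ 2 ≤ (α * ‖u‖) ^ 2 ↔ ‖v - (1 - α) • u‖ ≤ α * ‖u‖ :=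
    pow_le_pow_iff_left₀ (norm_nonneg _) (by positivity) two_ne_zero
  rw [← hsq]
  constructor
  · intro h
    nlinarith [hid, mul_nonneg hα.le (sub_nonneg.mpr h)]
  · intro h
    nlinarith [hid, sub_nonneg.mpr h, hα]

lemma averaged_iff {X : Type*} [NormedAddCommGroup X] [InnerProductSpace ℝ X]
    {α : ℝ} (hα : 0 < α) (S : X → X) :
    (∀ x y : X, ‖S x - S y‖ ^ 2 + (1 - α) / α * ‖(x - S x) - (y - S y)‖ ^ 2 ≤ ‖x - y‖ ^ 2)
      ↔ ∀ x y : X, ‖(S x - S y) - (1 - α) • (x - y)‖ ≤ α * ‖x - y‖ := by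
  have hrw : ∀ x y : X, (x - S x) - (y - S y) = (x - y) - (S x - S y) := by
    intro x y; abel
  constructor
  · intro h x y
    have := h x y
    rw [hrw] at this
    exact (key_iff α hα (x - y) (S x - S y)).mp this
  · intro h x y
    rw [hrw]
    exact (key_iff α hα (x - y) (S x - S y)).mpr (h x y)

/-- Normal form of `UnionAveraged` with index set `Fin n`. -/
lemma unionAveraged_fin {X : Type*} [NormedAddCommGroup X] [InnerProductSpace ℝ X]
    {α : ℝ} {T : X → Set X} (h : UnionAveraged α T) :
    ∃ (n : ℕ) (Ts : Fin n → X → X) (φ : X → Set (Fin n)),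
      (∀ i, Averaged α (Ts i)) ∧ OSCIdx φ ∧ (∀ x, (φ x).Nonempty) ∧
      ∀ x, T x = {y | ∃ i ∈ φ x, y = Ts i x} := by
  obtain ⟨I, hI, Ts, φ, hA, hO, hN, hE⟩ := h
  let g : I ≃ Fin (Fintype.card I) := Fintype.equivFin I
  refine ⟨Fintype.card I, fun i => Ts (g.symm i), fun x => {i | g.symm i ∈ φ x},
    fun i => hA _, ?_, ?_, ?_⟩
  · intro x i xn hx hmem
    exact hO x (g.symm i) xn hx hmem
  · intro x
    obtain ⟨i, hi⟩ := hN x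
    exact ⟨g i, by simpa using hi⟩
  · intro x
    rw [hE x]
    ext y
    constructor
    · rintro ⟨i, hi, rfl⟩
      exact ⟨g i, by simpa using hi, by simp⟩
    · rintro ⟨i, hi, rfl⟩
      exact ⟨g.symm i, hi, rfl⟩

/-- A Minkowski convex combination `Σ_j ω_j T_j` of union `α_j`-averaged
nonexpansive operators is union `Σ_j ω_j α_j`-averaged nonexpansive. -/
theorem stmt_4 {X J : Type*}
    [NormedAddCommGroup X] [InnerProductSpace ℝ X] [FiniteDimensional ℝ X]
    [Fintype J] [Nonempty J]
    (α : J → ℝ) (T : J → X → Set X)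
    (ω : J → ℝ) (hω : ∀ j, 0 < ω j) (hsum : ∑ j, ω j = 1)
    (h : ∀ j, UnionAveraged (α j) (T j)) :
    UnionAveraged (∑ j, ω j * α j)
      (fun x => {y | ∃ s : J → X, (∀ j, s j ∈ T j x) ∧ y = ∑ j, ω j • s j}) := by
  classical
  set N := Fintype.card J with hN'
  let e : Fin N ≃ J := (Fintype.equivFin J).symm
  choose m Ts φf hA hO hNe hE using fun k : Fin N => unionAveraged_fin (h (e k))
  set αs : ℝ := ∑ j, ω j * α j with hαs
  -- bounds on each α j
  have hαj : ∀ k : Fin N, 0 < α (e k) ∧ α (e k) < 1 := by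
    intro k
    obtain ⟨i, _⟩ := hNe k 0
    exact ⟨(hA k i).1, (hA k i).2.1⟩
  have hω' : ∀ j, 0 < ω j := hω
  have hαs0 : 0 < αs := by
    rw [hαs]
    apply Finset.sum_pos
    · intro j _
      have h2 : 0 < α (e (e.symm j)) := (hαj (e.symm j)).1
      rw [e.apply_symm_apply] at h2
      exact mul_pos (hω j) h2
    · exact Finset.univ_nonempty
  have hαs1 : αs < 1 := by
    rw [hαs, ← hsum]
    apply Finset.sum_lt_sum_of_nonempty Finset.univ_nonempty
    intro j _
    have hj1 : α j < 1 := by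
      have h2 : α (e (e.symm j)) < 1 := (hαj (e.symm j)).2
      rwa [e.apply_symm_apply] at h2
    calc ω j * α j < ω j * 1 := by exact mul_lt_mul_of_pos_left hj1 (hω j)
    _ = ω j := mul_one _
  -- sum over Fin N versions
  have hsumF : ∑ k, ω (e k) = 1 := by
    rw [Equiv.sum_comp e ω]; exact hsum
  have hαsF : ∑ k, ω (e k) * α (e k) = αs := by
    rw [hαs]; exact Equiv.sum_comp e (fun j => ω j * α j)
  refine ⟨∀ k : Fin N, Fin (m k), inferInstance,
    fun f x => ∑ k, ω (e k) • Ts k (f k) x,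
    fun x => {f | ∀ k, f k ∈ φf k x}, ?_, ?_, ?_, ?_⟩
  · -- averagedness
    intro f
    refine ⟨hαs0, hαs1, ?_⟩
    rw [averaged_iff hαs0]
    intro x y
    have hdecomp :
        (∑ k, ω (e k) • Ts k (f k) x) - (∑ k, ω (e k) • Ts k (f k) y)
            - (1 - αs) • (x - y)
          = ∑ k, ω (e k) • ((Ts k (f k) x - Ts k (f k) y)
              - (1 - α (e k)) • (x - y)) := by
      have h1 : ∑ k, ω (e k) • ((1 - α (e k)) • (x - y)) = (1 - αs) • (x - y) := by
        have hsc : ∑ k, ω (e k) * (1 - α (e k)) = 1 - αs := by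
          have hterm : ∀ k ∈ Finset.univ, ω (e k) * (1 - α (e k))
              = ω (e k) - ω (e k) * α (e k) := by intro k _; ring
          rw [Finset.sum_congr rfl hterm, Finset.sum_sub_distrib, hsumF, hαsF]
        calc ∑ k, ω (e k) • ((1 - α (e k)) • (x - y))
            = ∑ k, (ω (e k) * (1 - α (e k))) • (x - y) := by
              simp_rw [smul_smul]
          _ = (∑ k, ω (e k) * (1 - α (e k))) • (x - y) := (Finset.sum_smul).symm
          _ = (1 - αs) • (x - y) := by rw [hsc]
      calc (∑ k, ω (e k) • Ts k (f k) x) - (∑ k, ω (e k) • Ts k (f k) y)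
            - (1 - αs) • (x - y)
          = (∑ k, ω (e k) • Ts k (f k) x) - (∑ k, ω (e k) • Ts k (f k) y)
            - ∑ k, ω (e k) • ((1 - α (e k)) • (x - y)) := by rw [h1]
        _ = ∑ k, (ω (e k) • Ts k (f k) x - ω (e k) • Ts k (f k) y
              - ω (e k) • ((1 - α (e k)) • (x - y))) := by
            rw [Finset.sum_sub_distrib, Finset.sum_sub_distrib]
        _ = ∑ k, ω (e k) • ((Ts k (f k) x - Ts k (f k) y)
              - (1 - α (e k)) • (x - y)) := by
            apply Finset.sum_congr rfl
            intro k _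
            simp only [smul_sub]
    rw [hdecomp]
    calc ‖∑ k, ω (e k) • ((Ts k (f k) x - Ts k (f k) y) - (1 - α (e k)) • (x - y))‖
        ≤ ∑ k, ‖ω (e k) • ((Ts k (f k) x - Ts k (f k) y) - (1 - α (e k)) • (x - y))‖ :=
          norm_sum_le _ _
      _ ≤ ∑ k, ω (e k) * (α (e k) * ‖x - y‖) := by
          apply Finset.sum_le_sum
          intro k _
          rw [norm_smul, Real.norm_eq_abs, abs_of_pos (hω (e k))]
          apply mul_le_mul_of_nonneg_left _ (le_of_lt (hω (e k)))
          exact (averaged_iff (hA k (f k)).1 (Ts k (f k))).mp (hA k (f k)).2.2 x y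
      _ = αs * ‖x - y‖ := by
          rw [← hαsF, Finset.sum_mul]
          apply Finset.sum_congr rfl
          intro k _
          ring
  · -- OSC
    intro x f xn hx hmem k
    exact hO k x (f k) xn hx (fun n => hmem n k)
  · -- nonempty
    intro x
    exact ⟨fun k => (hNe k x).some, fun k => (hNe k x).some_mem⟩
  · -- set equality
    intro x
    ext y
    simp only [Set.mem_setOf_eq]
    constructor
    · rintro ⟨s, hs, rfl⟩
      have hsk : ∀ k, ∃ i ∈ φf k x, s (e k) = Ts k i x := by
        intro k
        have := hs (e k)
        rwa [hE k x] at this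
      choose i hi hsi using hsk
      refine ⟨i, hi, ?_⟩
      rw [← Equiv.sum_comp e (fun j => ω j • s j)]
      apply Finset.sum_congr rfl
      intro k _
      rw [hsi k]
    · rintro ⟨f, hf, rfl⟩
      refine ⟨fun j => Ts (e.symm j) (f (e.symm j)) x, ?_, ?_⟩
      · intro j
        have hEj := hE (e.symm j) x
        rw [e.apply_symm_apply] at hEj
        rw [hEj]
        exact ⟨f (e.symm j), hf _, rfl⟩
      · rw [← Equiv.sum_comp e (fun j => ω j • Ts (e.symm j) (f (e.symm j)) x)]
        apply Finset.sum_congr rfl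
        intro k _
        rw [e.symm_apply_apply]
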